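/- Let R be a commutative ring, let n, M ≥ 1 and m ≥ 1 be natural numbers, let α : Fin n → R satisfy that α i - α j is a unit for i ≠ j, and let β : Fin M → R satisfy that β i - β j is a unit for i ≠ j. Consider the ring homomorphism Φ from (R[X])[Y] to the product ring ∏_{(j,i) : Fin M × Fin n} R[X]/⟨X^m⟩ that sends p to the tuple whose (j,i)-component is the residue modulo X^m of Polynomial.taylor (α i) (Polynomial.eval (C (β j)) p), where p is first evaluated at Y = C(β j) to give an element of R[X]. Then the kernel of Φ is exactly the ideal of (R[X])[Y] generated by the two elements C(F) and G, where F = (∏_{i} (X - C (α i)))^m ∈ R[X] and G = ∏_{j} (Y - C (C (β j))) ∈ (R[X])[Y]. In particular Φ induces an injective ring homomorphism on the quotient (R[X])[Y]/⟨C(F), G⟩ (the multivariable Mattson–Solomon map). -/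

import Mathlib

open Polynomial

private lemma taylor_X_sub_C_pow {R : Type*} [CommRing R] (a : R) (m : ℕ) :
    taylor a ((X - C a) ^ m) = X ^ m := by
  have h : taylor a (X - C a) = X := by
    rw [map_sub, taylor_X, taylor_C]; ring
  rw [← taylorAlgHom_apply, map_pow, taylorAlgHom_apply, h]

private lemma taylor_dvd_iff {R : Type*} [CommRing R] (a : R) (m : ℕ) (q : R[X]) :
    (X : R[X]) ^ m ∣ taylor a q ↔ (X - C a) ^ m ∣ q := by
  constructor
  · rintro ⟨c, hc⟩
    refine ⟨taylor (-a) c, taylor_injective a ?_⟩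
    rw [taylor_mul, taylor_X_sub_C_pow, hc]
    congr 1
    rw [taylor_taylor, add_neg_cancel, taylor_zero]
  · rintro ⟨c, hc⟩
    exact ⟨taylor a c, by rw [hc, taylor_mul, taylor_X_sub_C_pow]⟩

private lemma eq_zero_of_roots_aux {S : Type*} [CommRing S] {M : ℕ} (γ : Fin M → S)
    (hγ : ∀ i j : Fin M, i ≠ j → IsUnit (γ i - γ j)) (r : S[X])
    (hdeg : r.degree < (M : ℕ)) (hroot : ∀ j, r.eval (γ j) = 0) : r = 0 := by
  by_contra hr
  haveI : Nontrivial S := by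
    rcases subsingleton_or_nontrivial S with h | h
    · exact absurd (Subsingleton.elim r 0) hr
    · exact h
  have hdvd : (∏ j : Fin M, (X - C (γ j))) ∣ r := by
    refine Finset.prod_dvd_of_coprime (fun i _ j _ hij =>
      isCoprime_X_sub_C_of_isUnit_sub (hγ i j hij)) (fun j _ => ?_)
    exact dvd_iff_isRoot.2 (hroot j)
  have hmonic : (∏ j : Fin M, (X - C (γ j))).Monic :=
    monic_prod_of_monic _ _ fun j _ => monic_X_sub_C _
  have hnd : (∏ j : Fin M, (X - C (γ j))).natDegree = M := by
    rw [natDegree_prod_of_monic _ _ fun j _ => monic_X_sub_C _]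
    simp [natDegree_X_sub_C]
  obtain ⟨c, hc⟩ := hdvd
  have hc0 : c ≠ 0 := by rintro rfl; simp at hc; exact hr hc
  have : r.natDegree = M + c.natDegree := by
    rw [hc, hmonic.natDegree_mul' hc0, hnd]
  have hlt : r.natDegree < M := (natDegree_lt_iff_degree_lt hr).2 hdeg
  omega

/-- The multivariable Mattson–Solomon map: the homomorphism from `(R[X])[Y]` to
`∏ (j,i), R[X]/⟨X^m⟩` sending `p` to the tuple of residues of
`taylor (α i) (p.eval (C (β j)))` has kernel `⟨C F, G⟩` where
`F = (∏ i, (X - C (α i)))^m` and `G = ∏ j, (Y - C (C (β j)))`, and hence induces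
an injective ring homomorphism on `(R[X])[Y]/⟨C F, G⟩`. -/
theorem multivariable_mattson_solomon {R : Type*} [CommRing R] (n M m : ℕ)
    (hn : 1 ≤ n) (hM : 1 ≤ M) (hm : 1 ≤ m)
    (α : Fin n → R) (hα : ∀ i j : Fin n, i ≠ j → IsUnit (α i - α j))
    (β : Fin M → R) (hβ : ∀ i j : Fin M, i ≠ j → IsUnit (β i - β j)) :
    (∀ p : Polynomial (Polynomial R),
      (∀ ji : Fin M × Fin n,
          Ideal.Quotient.mk (Ideal.span {(X : R[X]) ^ m})
            (Polynomial.taylor (α ji.2) (p.eval (C (β ji.1)))) = 0) ↔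
        p ∈ Ideal.span ({Polynomial.C ((∏ i : Fin n, (X - C (α i))) ^ m),
            ∏ j : Fin M, (X - C (C (β j)))} : Set (Polynomial (Polynomial R)))) ∧
    ∃ ψ : (Polynomial (Polynomial R) ⧸
        Ideal.span ({Polynomial.C ((∏ i : Fin n, (X - C (α i))) ^ m),
            ∏ j : Fin M, (X - C (C (β j)))} : Set (Polynomial (Polynomial R)))) →+*
        (Fin M × Fin n → R[X] ⧸ Ideal.span {(X : R[X]) ^ m}),
      Function.Injective ψ ∧
        ∀ p : Polynomial (Polynomial R),
          ψ (Ideal.Quotient.mk _ p) =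
            fun ji : Fin M × Fin n =>
              Ideal.Quotient.mk (Ideal.span {(X : R[X]) ^ m})
                (Polynomial.taylor (α ji.2) (p.eval (C (β ji.1)))) := by
  set F : R[X] := (∏ i : Fin n, (X - C (α i))) ^ m with hF
  set G : Polynomial (Polynomial R) := ∏ j : Fin M, (X - C (C (β j))) with hG
  have hGmonic : G.Monic := monic_prod_of_monic _ _ fun j _ => monic_X_sub_C _
  -- evaluation of G at C (β j) is 0
  have hGeval : ∀ j : Fin M, G.eval (C (β j)) = 0 := by
    intro j
    rw [hG, eval_prod]
    exact Finset.prod_eq_zero (Finset.mem_univ j) (by simp)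
  -- key characterization
  have key : ∀ p : Polynomial (Polynomial R),
      (∀ ji : Fin M × Fin n,
          Ideal.Quotient.mk (Ideal.span {(X : R[X]) ^ m})
            (Polynomial.taylor (α ji.2) (p.eval (C (β ji.1)))) = 0) ↔
        p ∈ Ideal.span ({C F, G} : Set (Polynomial (Polynomial R))) := by
    intro p
    have step1 : (∀ ji : Fin M × Fin n,
        Ideal.Quotient.mk (Ideal.span {(X : R[X]) ^ m})
          (Polynomial.taylor (α ji.2) (p.eval (C (β ji.1)))) = 0) ↔
        ∀ j : Fin M, F ∣ p.eval (C (β j)) := by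
      constructor
      · intro h j
        rw [hF, ← Finset.prod_pow]
        refine Finset.prod_dvd_of_coprime (fun i _ i' _ hii' =>
          (isCoprime_X_sub_C_of_isUnit_sub (hα i i' hii')).pow) (fun i _ => ?_)
        have := h (j, i)
        rw [Ideal.Quotient.eq_zero_iff_mem, Ideal.mem_span_singleton] at this
        exact (taylor_dvd_iff _ _ _).1 this
      · intro h ji
        rw [Ideal.Quotient.eq_zero_iff_mem, Ideal.mem_span_singleton, taylor_dvd_iff]
        refine dvd_trans ?_ (h ji.1)
        rw [hF, ← Finset.prod_pow]
        exact Finset.dvd_prod_of_mem _ (Finset.mem_univ ji.2)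
    rw [step1]
    constructor
    · intro h
      rcases subsingleton_or_nontrivial R with hR | hR
      · haveI : Subsingleton (Polynomial (Polynomial R)) := by infer_instance
        rw [Subsingleton.elim p 0]; exact Ideal.zero_mem _
      -- nontrivial case
      have hdegG : G.degree = (M : ℕ) := by
        rw [degree_eq_natDegree hGmonic.ne_zero, hG,
          natDegree_prod_of_monic _ _ fun j _ => monic_X_sub_C _]
        simp [natDegree_X_sub_C]
      set r : Polynomial (Polynomial R) := p %ₘ G with hr
      have hpr : p = G * (p /ₘ G) + r := by
        rw [hr, add_comm]; exact (modByMonic_add_div p G).symm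
      have hdegr : r.degree < (M : ℕ) := hdegG ▸ degree_modByMonic_lt p hGmonic
      have hFr : ∀ j : Fin M, F ∣ r.eval (C (β j)) := by
        intro j
        have : r.eval (C (β j)) = p.eval (C (β j)) := by
          conv_rhs => rw [hpr]
          rw [eval_add, eval_mul, hGeval j, zero_mul, zero_add]
        rw [this]; exact h j
      -- reduce mod F
      set φ : R[X] →+* R[X] ⧸ Ideal.span {F} := Ideal.Quotient.mk (Ideal.span {F}) with hφ
      have hr0 : r.map φ = 0 := by
        refine eq_zero_of_roots_aux (fun j => φ (C (β j))) ?_ _ ?_ ?_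
        · intro i j hij
          rw [← map_sub, ← map_sub]
          exact ((hβ i j hij).map C).map φ
        · exact lt_of_le_of_lt (degree_map_le) hdegr
        · intro j
          rw [eval_map, eval₂_at_apply, Ideal.Quotient.eq_zero_iff_mem,
            Ideal.mem_span_singleton]
          exact hFr j
      have hCF : C F ∣ r := by
        rw [C_dvd_iff_dvd_coeff]
        intro k
        have : φ (r.coeff k) = 0 := by
          have := congrArg (fun q => Polynomial.coeff q k) hr0
          simpa [coeff_map] using this
        rwa [hφ, Ideal.Quotient.eq_zero_iff_mem, Ideal.mem_span_singleton] at this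
      obtain ⟨c, hc⟩ := hCF
      rw [Ideal.mem_span_pair]
      exact ⟨c, p /ₘ G, by rw [mul_comm c, ← hc, mul_comm (p /ₘ G) G, add_comm]; exact hpr.symm⟩
    · intro hp j
      rw [Ideal.mem_span_pair] at hp
      obtain ⟨a, b, hab⟩ := hp
      rw [← hab, eval_add, eval_mul, eval_mul, eval_C, hGeval j, mul_zero, add_zero]
      exact dvd_mul_left F _
  refine ⟨key, ?_⟩
  -- construct ψ
  set Φ : Polynomial (Polynomial R) →+* (Fin M × Fin n → R[X] ⧸ Ideal.span {(X : R[X]) ^ m}) :=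
    Pi.ringHom (fun ji =>
      ((Ideal.Quotient.mk (Ideal.span {(X : R[X]) ^ m})).comp
        (taylorAlgHom (α ji.2)).toRingHom).comp (evalRingHom (C (β ji.1)))) with hΦ
  have hΦapply : ∀ p ji, Φ p ji =
      Ideal.Quotient.mk (Ideal.span {(X : R[X]) ^ m})
        (Polynomial.taylor (α ji.2) (p.eval (C (β ji.1)))) := by
    intro p ji; rfl
  refine ⟨Ideal.Quotient.lift _ Φ (fun a ha => ?_), ?_, ?_⟩
  · funext ji
    have := (key a).2 ha ji
    rw [hΦapply]; exact this
  · rw [injective_iff_map_eq_zero]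
    intro a ha
    obtain ⟨p, rfl⟩ := Ideal.Quotient.mk_surjective a
    rw [Ideal.Quotient.lift_mk] at ha
    rw [Ideal.Quotient.eq_zero_iff_mem]
    refine (key p).1 (fun ji => ?_)
    have := congrFun ha ji
    rw [hΦapply] at this
    exact this
  · intro p
    funext ji
    rw [Ideal.Quotient.lift_mk, hΦapply]
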